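/- For all positive integers r and n with r even, F_{3r} * (∑_{k=1}^n F_{2rk}^3) = F_{rn}^2 * F_{rn+r}^2 * (L_{rn} * L_{rn+r} + L_r). -/

import Mathlib

open Finset

def L : ℕ → ℤ
  | 0 => 2
  | 1 => 1
  | n + 2 => L (n + 1) + L n

def F (n : ℕ) : ℤ := Nat.fib n



lemma Frec (n : ℕ) : F (n + 2) = F (n + 1) + F n := by
  simp [F, Nat.fib_add_two]; ring

lemma Lrec (n : ℕ) : L (n + 2) = L (n + 1) + L n := rfl

lemma F0 : F 0 = 0 := rfl
lemma F1 : F 1 = 1 := rfl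
lemma L0 : L 0 = 2 := rfl
lemma L1 : L 1 = 1 := rfl

lemma LF : ∀ n, L n = 2 * F (n + 1) - F n := by
  intro n
  induction n using Nat.twoStepInduction with
  | zero => simp [L0, F0, F1]
  | one => show L 1 = 2 * F 2 - F 1
           rw [L1, Frec 0, F0, F1]; ring
  | more n ih1 ih2 =>
    have h1 : F (n+3) = F (n+2) + F (n+1) := Frec (n+1)
    have h2 : F (n+2) = F (n+1) + F n := Frec n
    have h3 : L (n+2) = L (n+1) + L n := rfl
    have ih2' : L (n+1) = 2 * F (n+2) - F (n+1) := ih2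
    have : L (n+2) = 2 * F (n+3) - F (n+2) := by linarith
    exact this

lemma cassini : ∀ n, F (n+1)^2 - F (n+1) * F n - F n ^ 2 = (-1)^n := by
  intro n
  induction n with
  | zero => simp [F0, F1]
  | succ n ih =>
    have h : F (n+2) = F (n+1) + F n := Frec n
    rw [h]; push_cast [pow_succ]; linear_combination (-1) * ih

lemma LFsq (n : ℕ) : L n ^ 2 - 5 * F n ^ 2 = 4 * (-1)^n := by
  rw [LF]; linear_combination 4 * cassini n

lemma addF : ∀ m n : ℕ, 2 * F (m + n) = F m * L n + L m * F n := by
  intro m n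
  induction n using Nat.twoStepInduction with
  | zero => simp [F0, L0]; ring
  | one =>
    have h : L m = 2 * F (m+1) - F m := LF m
    show 2 * F (m+1) = F m * L 1 + L m * F 1
    rw [L1, F1]; linarith
  | more n ih1 ih2 =>
    have e : F (m + (n+2)) = F ((m+n)+1) + F (m+n) := Frec (m+n)
    have B : F (m+(n+1)) = F ((m+n)+1) := by rw [Nat.add_succ, Nat.add_succ]
    rw [B] at ih2
    rw [show m + (n+2) = (m+n)+2 by omega]
    rw [Frec (m+n), Lrec n, Frec n]
    linear_combination ih1 + ih2
lemma addL : ∀ m n : ℕ, 2 * L (m + n) = L m * L n + 5 * F m * F n := by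
  intro m n
  induction n using Nat.twoStepInduction with
  | zero => simp [F0, L0]; ring
  | one =>
    have h : L m = 2 * F (m+1) - F m := LF m
    have h2 : L (m+1) = 2 * F (m+2) - F (m+1) := LF (m+1)
    have h3 : F (m+2) = F (m+1) + F m := Frec m
    show 2 * L (m+1) = L m * L 1 + 5 * F m * F 1
    rw [L1, F1]; linarith
  | more n ih1 ih2 =>
    have B : L (m+(n+1)) = L ((m+n)+1) := by rw [Nat.add_succ, Nat.add_succ]
    rw [B] at ih2
    rw [show m + (n+2) = (m+n)+2 by omega]
    rw [Lrec (m+n), Lrec n, Frec n]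
    linear_combination ih1 + ih2


lemma alg (f l g k X Y Z W : ℤ) (hk : k^2 = 5*g^2+4) (hl : l^2 = 5*f^2+4)
    (hX : 2*X = f*k + l*g) (hY : 2*Y = l*k + 5*f*g) (hZ : 2*Z = X*k + Y*g)
    (hW : 2*W = Y*k + 5*X*g) :
    (g*(k^2-1)) * (X*Y)^3 = X^2*Z^2*(Y*W + k) - f^2*X^2*(l*Y + k) := by
  have key : 512 * ((g*(k^2-1)) * (X*Y)^3) =
      512 * (X^2*Z^2*(Y*W + k) - f^2*X^2*(l*Y + k)) := by
    linear_combination ((-256:ℤ)*X^2*Y*Z*W + (-256:ℤ)*k*X^2*Z + (-128:ℤ)*k*X^3*Y*W + (-128:ℤ)*k^2*X^3 + (-128:ℤ)*g*X^2*Y^2*W + (-128:ℤ)*g*k*X^2*Y) * hZ + ((-64:ℤ)*k^2*X^4*Y + (-128:ℤ)*g*k*X^3*Y^2 + (-64:ℤ)*g^2*X^2*Y^3) * hW + ((-64:ℤ)*k^3*X^3 + (-32:ℤ)*k^3*X^3*Y^2 + (-256:ℤ)*g*X^2*Y^3 + (-128:ℤ)*g*k^2*X^2*Y + (192:ℤ)*g*k^2*X^2*Y^3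 + (-160:ℤ)*g*k^2*X^4*Y + (-64:ℤ)*g^2*k*X*Y^2 + (-32:ℤ)*g^2*k*X*Y^4 + (-320:ℤ)*g^2*k*X^3*Y^2 + (-160:ℤ)*g^3*X^2*Y^3 + (-32:ℤ)*l*g*k^3*X^2 + (-16:ℤ)*l*g*k^3*X^2*Y^2 + (-128:ℤ)*l*g^2*X*Y^3 + (-64:ℤ)*l*g^2*k^2*X*Y + (96:ℤ)*l*g^2*k^2*X*Y^3 + (-80:ℤ)*l*g^2*k^2*X^3*Y + (-32:ℤ)*l*g^3*k*Y^2 + (-16:ℤ)*l*g^3*k*Y^4 + (-160:ℤ)*l*g^3*k*X^2*Y^2 + (-80:ℤ)*l*g^4*X*Y^3 + (-16:ℤ)*l^2*g^2*k^3*X + (-8:ℤ)*l^2*g^2*k^3*X*Y^2 + (-64:ℤ)*l^2*g^3*Y^3 + (-32:ℤ)*l^2*g^3*k^2*Y + (48:ℤ)*l^2*g^3*k^2*Y^3 + (-40:ℤ)*l^2*g^3*k^2*X^2*Y + (-80:ℤ)*l^2*g^4*k*X*Y^2 + (-40:ℤ)*l^2*g^5*Y^3 + (-8:ℤ)*l^3*g^3*k^3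 + (-4:ℤ)*l^3*g^3*k^3*Y^2 + (-20:ℤ)*l^3*g^4*k^2*X*Y + (-40:ℤ)*l^3*g^5*k*Y^2 + (-10:ℤ)*l^4*g^5*k^2*Y + (-32:ℤ)*f*k^4*X^2 + (-16:ℤ)*f*k^4*X^2*Y^2 + (-128:ℤ)*f*g*k*X*Y^3 + (-64:ℤ)*f*g*k^3*X*Y + (96:ℤ)*f*g*k^3*X*Y^3 + (-80:ℤ)*f*g*k^3*X^3*Y + (-32:ℤ)*f*g^2*k^2*Y^2 + (-16:ℤ)*f*g^2*k^2*Y^4 + (-160:ℤ)*f*g^2*k^2*X^2*Y^2 + (-80:ℤ)*f*g^3*k*X*Y^3 + (-32:ℤ)*f*l*g*k^4*X + (-16:ℤ)*f*l*g*k^4*X*Y^2 + (-128:ℤ)*f*l*g^2*k*Y^3 + (-64:ℤ)*f*l*g^2*k^3*Y + (96:ℤ)*f*l*g^2*k^3*Y^3 + (-80:ℤ)*f*l*g^2*k^3*X^2*Y + (-160:ℤ)*f*l*g^3*k^2*X*Y^2 + (-80:ℤ)*f*l*g^4*k*Y^3 + (-24:ℤ)*f*l^2*g^2*k^4 + (-12:ℤ)*f*l^2*g^2*k^4*Y^2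 + (-60:ℤ)*f*l^2*g^3*k^3*X*Y + (-120:ℤ)*f*l^2*g^4*k^2*Y^2 + (-40:ℤ)*f*l^3*g^4*k^3*Y + (256:ℤ)*f^2*k*X + (-16:ℤ)*f^2*k^5*X + (-8:ℤ)*f^2*k^5*X*Y^2 + (-64:ℤ)*f^2*g*k^2*Y^3 + (-32:ℤ)*f^2*g*k^4*Y + (48:ℤ)*f^2*g*k^4*Y^3 + (-40:ℤ)*f^2*g*k^4*X^2*Y + (-80:ℤ)*f^2*g^2*k^3*X*Y^2 + (-40:ℤ)*f^2*g^3*k^2*Y^3 + (256:ℤ)*f^2*l*X*Y + (128:ℤ)*f^2*l*g*k + (-24:ℤ)*f^2*l*g*k^5 + (-12:ℤ)*f^2*l*g*k^5*Y^2 + (-60:ℤ)*f^2*l*g^2*k^4*X*Y + (-120:ℤ)*f^2*l*g^3*k^3*Y^2 + (128:ℤ)*f^2*l^2*g*Y + (-60:ℤ)*f^2*l^2*g^3*k^4*Y + (128:ℤ)*f^3*k^2 + (-8:ℤ)*f^3*k^6 + (-4:ℤ)*f^3*k^6*Y^2 + (-20:ℤ)*f^3*g*k^5*X*Y + (-40:ℤ)*f^3*g^2*k^4*Y^2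 + (128:ℤ)*f^3*l*k*Y + (-40:ℤ)*f^3*l*g^2*k^5*Y + (-10:ℤ)*f^4*g*k^6*Y) * hX + ((-16:ℤ)*l^2*g^4*k*Y + (-8:ℤ)*l^2*g^4*k*Y^3 + (-32:ℤ)*l^3*g^4*Y^2 + (-24:ℤ)*l^3*g^4*k^2 + (20:ℤ)*l^3*g^4*k^2*Y^2 + (-20:ℤ)*l^3*g^6*Y^2 + (-16:ℤ)*l^4*g^4*k*Y + (8:ℤ)*l^4*g^4*k^3*Y + (-30:ℤ)*l^4*g^6*k*Y + (-8:ℤ)*l^5*g^4*k^2 + (4:ℤ)*l^5*g^4*k^4 + (-20:ℤ)*l^5*g^6*k^2 + (-32:ℤ)*f*l*g^3*k^2*Y + (-16:ℤ)*f*l*g^3*k^2*Y^3 + (-96:ℤ)*f*l^2*g^3*k*Y^2 + (-64:ℤ)*f*l^2*g^3*k^3 + (64:ℤ)*f*l^2*g^3*k^3*Y^2 + (-40:ℤ)*f*l^2*g^5*k + (-80:ℤ)*f*l^2*g^5*k*Y^2 + (-48:ℤ)*f*l^3*g^3*k^2*Y + (24:ℤ)*f*l^3*g^3*k^4*Y +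 (-80:ℤ)*f*l^3*g^5*Y + (-70:ℤ)*f*l^3*g^5*k^2*Y + (-50:ℤ)*f*l^3*g^7*Y + (-24:ℤ)*f*l^4*g^3*k^3 + (12:ℤ)*f*l^4*g^3*k^5 + (-80:ℤ)*f*l^4*g^5*k + (-40:ℤ)*f*l^4*g^5*k^3 + (-100:ℤ)*f*l^4*g^7*k + (-16:ℤ)*f^2*g^2*k^3*Y + (-8:ℤ)*f^2*g^2*k^3*Y^3 + (-96:ℤ)*f^2*l*g^2*k^2*Y^2 + (-56:ℤ)*f^2*l*g^2*k^4 + (68:ℤ)*f^2*l*g^2*k^4*Y^2 + (-80:ℤ)*f^2*l*g^4*k^2 + (-100:ℤ)*f^2*l*g^4*k^2*Y^2 + (-48:ℤ)*f^2*l^2*g^2*k^3*Y + (22:ℤ)*f^2*l^2*g^2*k^5*Y + (-240:ℤ)*f^2*l^2*g^4*k*Y + (-10:ℤ)*f^2*l^2*g^4*k^3*Y + (-200:ℤ)*f^2*l^2*g^6*k*Y + (64:ℤ)*f^2*l^3*g^2 + (-24:ℤ)*f^2*l^3*g^2*k^4 + (11:ℤ)*f^2*l^3*g^2*k^6 + (-240:ℤ)*f^2*l^3*g^4*k^2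 + (5:ℤ)*f^2*l^3*g^4*k^4 + (-200:ℤ)*f^2*l^3*g^6 + (-275:ℤ)*f^2*l^3*g^6*k^2 + (-125:ℤ)*f^2*l^3*g^8 + (-32:ℤ)*f^3*g*k^3*Y^2 + (-16:ℤ)*f^3*g*k^5 + (24:ℤ)*f^3*g*k^5*Y^2 + (-40:ℤ)*f^3*g^3*k^3 + (-40:ℤ)*f^3*g^3*k^3*Y^2 + (-16:ℤ)*f^3*l*g*k^4*Y + (4:ℤ)*f^3*l*g*k^6*Y + (-240:ℤ)*f^3*l*g^3*k^2*Y + (70:ℤ)*f^3*l*g^3*k^4*Y + (-250:ℤ)*f^3*l*g^5*k^2*Y + (128:ℤ)*f^3*l^2*g*k + (-8:ℤ)*f^3*l^2*g*k^5 + (2:ℤ)*f^3*l^2*g*k^7 + (-240:ℤ)*f^3*l^2*g^3*k^3 + (40:ℤ)*f^3*l^2*g^3*k^5 + (-600:ℤ)*f^3*l^2*g^5*k + (-150:ℤ)*f^3*l^2*g^5*k^3 + (-500:ℤ)*f^3*l^2*g^7*k + (-2:ℤ)*f^4*k^7*Y + (-80:ℤ)*f^4*g^2*k^3*Y + (40:ℤ)*f^4*g^2*k^5*Y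 + (-100:ℤ)*f^4*g^4*k^3*Y + (64:ℤ)*f^4*l*k^2 + (-1:ℤ)*f^4*l*k^8 + (-80:ℤ)*f^4*l*g^2*k^4 + (5:ℤ)*f^4*l*g^2*k^6 + (-600:ℤ)*f^4*l*g^4*k^2 + (125:ℤ)*f^4*l*g^4*k^4 + (-625:ℤ)*f^4*l*g^6*k^2 + (-10:ℤ)*f^5*g*k^7 + (-200:ℤ)*f^5*g^3*k^3 + (100:ℤ)*f^5*g^3*k^5 + (-250:ℤ)*f^5*g^5*k^3) * hY + ((-32:ℤ)*l^4*g^4*k + (8:ℤ)*l^6*g^4*k + (4:ℤ)*l^6*g^4*k^3 + (-384:ℤ)*f*l^3*g^3 + (-96:ℤ)*f*l^3*g^3*k^2 + (-640:ℤ)*f*l^3*g^5 + (96:ℤ)*f*l^5*g^3 + (24:ℤ)*f*l^5*g^3*k^2 + (12:ℤ)*f*l^5*g^3*k^4 + (160:ℤ)*f*l^5*g^5 + (40:ℤ)*f*l^5*g^5*k^2 + (-416:ℤ)*f^2*l^2*g^2*k + (-104:ℤ)*f^2*l^2*g^2*k^3 + (-920:ℤ)*f^2*l^2*g^4*k + (80:ℤ)*f^2*l^4*g^2*k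 + (20:ℤ)*f^2*l^4*g^2*k^3 + (11:ℤ)*f^2*l^4*g^2*k^5 + (220:ℤ)*f^2*l^4*g^4*k + (120:ℤ)*f^2*l^4*g^4*k^3 + (125:ℤ)*f^2*l^4*g^6*k + (-512:ℤ)*f^3*l*g + (-192:ℤ)*f^3*l*g*k^2 + (-48:ℤ)*f^3*l*g*k^4 + (-3200:ℤ)*f^3*l*g^3 + (-560:ℤ)*f^3*l*g^3*k^2 + (-3200:ℤ)*f^3*l*g^5 + (128:ℤ)*f^3*l^3*g + (2:ℤ)*f^3*l^3*g*k^6 + (240:ℤ)*f^3*l^3*g^3 + (60:ℤ)*f^3*l^3*g^3*k^2 + (105:ℤ)*f^3*l^3*g^3*k^4 + (100:ℤ)*f^3*l^3*g^5 + (400:ℤ)*f^3*l^3*g^5*k^2 + (125:ℤ)*f^3*l^3*g^7 + (-32:ℤ)*f^4*k^3 + (-8:ℤ)*f^4*k^5 + (-640:ℤ)*f^4*g^2*k + (-120:ℤ)*f^4*g^2*k^3 + (-800:ℤ)*f^4*g^4*k + (-16:ℤ)*f^4*l^2*k^3 + (-4:ℤ)*f^4*l^2*k^5 + (-1:ℤ)*f^4*l^2*k^7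 + (-480:ℤ)*f^4*l^2*g^2*k + (-100:ℤ)*f^4*l^2*g^2*k^3 + (10:ℤ)*f^4*l^2*g^2*k^5 + (-800:ℤ)*f^4*l^2*g^4*k + (375:ℤ)*f^4*l^2*g^4*k^3 + (500:ℤ)*f^4*l^2*g^6*k + (-640:ℤ)*f^5*l*g + (-240:ℤ)*f^5*l*g*k^2 + (-60:ℤ)*f^5*l*g*k^4 + (-15:ℤ)*f^5*l*g*k^6 + (-4000:ℤ)*f^5*l*g^3 + (-700:ℤ)*f^5*l*g^3*k^2 + (50:ℤ)*f^5*l*g^3*k^4 + (-4000:ℤ)*f^5*l*g^5 + (625:ℤ)*f^5*l*g^5*k^2 + (-800:ℤ)*f^6*g^2*k + (-200:ℤ)*f^6*g^2*k^3 + (-50:ℤ)*f^6*g^2*k^5 + (-1000:ℤ)*f^6*g^4*k + (250:ℤ)*f^6*g^4*k^3) * hk + ((32:ℤ)*l^4*g^4*k + (40:ℤ)*l^4*g^6*k + (384:ℤ)*f*l^3*g^3 + (1120:ℤ)*f*l^3*g^5 + (800:ℤ)*f*l^3*g^7 + (384:ℤ)*f^2*l^2*g^2*k + (1440:ℤ)*f^2*l^2*g^4*k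 + (1200:ℤ)*f^2*l^2*g^6*k + (512:ℤ)*f^3*l*g + (3840:ℤ)*f^3*l*g^3 + (7200:ℤ)*f^3*l*g^5 + (4000:ℤ)*f^3*l*g^7 + (640:ℤ)*f^4*g^2*k + (1600:ℤ)*f^4*g^4*k + (1000:ℤ)*f^4*g^6*k) * hl
  linarith

lemma evensq {a : ℕ} (ha : Even a) : L a ^ 2 = 5 * F a ^ 2 + 4 := by
  have := LFsq a
  rw [ha.neg_one_pow] at this
  linarith

lemma Fdouble (a : ℕ) : F (2 * a) = F a * L a := by
  have h := addF a a
  rw [two_mul]; linarith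

lemma Ldouble {a : ℕ} (ha : Even a) : L (2 * a) = 5 * F a ^ 2 + 4 - 2 := by
  have h := addL a a
  have hk := evensq ha
  rw [two_mul]; nlinarith [h, hk]

lemma Ftriple {a : ℕ} (ha : Even a) : F (3 * a) = F a * (L a ^ 2 - 1) := by
  have h := addF a (2 * a)
  rw [show a + 2 * a = 3 * a by ring] at h
  rw [Fdouble, Ldouble ha] at h
  have hk := evensq ha
  have h2 : 2 * F (3 * a) = 2 * (F a * (L a ^ 2 - 1)) := by
    linear_combination h - F a * hk
  linarith

theorem stmt15 (r n : ℕ) (hr : 0 < r) (hn : 0 < n) (hre : Even r) :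
    F (3 * r) * ∑ k ∈ Finset.Icc 1 n, F (2 * r * k) ^ 3 =
      F (r * n) ^ 2 * F (r * n + r) ^ 2 * (L (r * n) * L (r * n + r) + L r) := by
  have hk : L r ^ 2 = 5 * F r ^ 2 + 4 := evensq hre
  induction n, hn using Nat.le_induction with
  | base =>
    rw [Finset.Icc_self, Finset.sum_singleton]
    rw [show r * Nat.succ 0 = r by simp, show 2 * r * Nat.succ 0 = 2 * r by simp,
        show r + r = 2 * r by ring]
    rw [Fdouble, Ldouble hre, Ftriple hre]
    linear_combination (F r ^ 4 * L r ^ 3) * hk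
  | succ n hn1 ih =>
    have hl : L (r * n) ^ 2 = 5 * F (r * n) ^ 2 + 4 := evensq (hre.mul_right n)
    rw [Finset.sum_Icc_succ_top (by omega : 1 ≤ n + 1)]
    rw [show r * (n + 1) = r * n + r by ring,
        show 2 * r * (n + 1) = 2 * (r * n + r) by ring]
    have key := alg (F (r*n)) (L (r*n)) (F r) (L r)
      (F (r*n + r)) (L (r*n + r)) (F (r*n + r + r)) (L (r*n + r + r))
      hk hl (addF (r*n) r) (addL (r*n) r) (addF (r*n + r) r) (addL (r*n + r) r)
    rw [Fdouble (r*n + r), Ftriple hre]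
    rw [Ftriple hre] at ih
    linear_combination ih + key
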